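/- Let log : (k^{>0},·) → (k,+) be an order-preserving group embedding and l a prelogarithmic section of k((G)). Then the map L defined by L(α) := l(g) + log(a) + Σ_{i≥1}(−1)^{i−1}ε^i/i, where α = g·a·(1+ε) with g = v(α), a ∈ k^{>0}, ε ∈ k((G^{<1})), is an order-preserving group embedding L : (k((G))^{>0},·) → (k((G)),+), and it is the unique such embedding that extends log on k^{>0}, agrees with l on G, and agrees with the logarithm on 1-units on 1 + k((G^{<1})). -/

import Mathlib

/-! Common framework: fields of generalized power series `k((G))` over a multiplicative
linearly ordered abelian group `G`, realized as Mathlib Hahn series over the additive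
order-dual of `G` (so that anti well-ordered supports in `G` become partially
well-ordered supports), with the anti-lexicographic order. -/

noncomputable section
open HahnSeries
open scoped Classical

/-- The additive order-dual copy of the multiplicative group `G`:
anti well-ordered subsets of `G` correspond to well-ordered subsets of `gdual G`. -/
abbrev gdual (G : Type*) [CommGroup G] [LinearOrder G] [IsOrderedMonoid G] : Type _ := Additive Gᵒᵈ

/-- View an element of `G` as an exponent (element of `gdual G`). -/
def toGd {G : Type*} [CommGroup G] [LinearOrder G] [IsOrderedMonoid G] (g : G) : gdual G :=
  Additive.ofMul (OrderDual.toDual g)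

/-- View an exponent (element of `gdual G`) as an element of `G`. -/
def toG {G : Type*} [CommGroup G] [LinearOrder G] [IsOrderedMonoid G] (γ : gdual G) : G :=
  OrderDual.ofDual (Additive.toMul γ)

section HahnOrder

variable {k : Type*} [Field k] [LinearOrder k] [IsStrictOrderedRing k] {Γ' : Type*} [LinearOrder Γ']

theorem hahn_leadingCoeff_of_ne {x : HahnSeries Γ' k} (hx : x ≠ 0) :
    x.leadingCoeff = x.coeff (x.isWF_support.min (HahnSeries.support_nonempty_iff.2 hx)) := by
  rw [HahnSeries.leadingCoeff_of_ne_zero hx]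
  congr 1
  rw [WithTop.untop_eq_iff]
  simp [HahnSeries.orderTop, hx]

theorem hahn_leadingCoeff_neg (x : HahnSeries Γ' k) : (-x).leadingCoeff = -x.leadingCoeff := by
  by_cases h : x = 0
  · simp [h]
  · have hn : (-x) ≠ 0 := neg_ne_zero.2 h
    rw [hahn_leadingCoeff_of_ne h, hahn_leadingCoeff_of_ne hn]
    have hmin : (-x).isWF_support.min (HahnSeries.support_nonempty_iff.2 hn)
        = x.isWF_support.min (HahnSeries.support_nonempty_iff.2 h) := by
      apply le_antisymm
      · exact Set.IsWF.min_le _ _ (by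
          rw [HahnSeries.support_neg (x := x)]
          exact x.isWF_support.min_mem (HahnSeries.support_nonempty_iff.2 h))
      · refine Set.IsWF.min_le _ _ ?_
        rw [← HahnSeries.support_neg (x := x)]
        exact (-x).isWF_support.min_mem (HahnSeries.support_nonempty_iff.2 hn)
    rw [hmin, HahnSeries.coeff_neg]

theorem hahn_leadingCoeff_add_pos {a b : HahnSeries Γ' k}
    (ha : 0 < a.leadingCoeff) (hb : 0 < b.leadingCoeff) : 0 < (a + b).leadingCoeff := by
  have key : ∀ x y : HahnSeries Γ' k, 0 < x.leadingCoeff → 0 < y.leadingCoeff →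
      ∀ (hx0 : x ≠ 0) (hy0 : y ≠ 0),
      x.isWF_support.min (HahnSeries.support_nonempty_iff.2 hx0) ≤
        y.isWF_support.min (HahnSeries.support_nonempty_iff.2 hy0) →
      0 < (x + y).leadingCoeff := by
    intro x y hx hy hx0 hy0 hle
    set mx := x.isWF_support.min (HahnSeries.support_nonempty_iff.2 hx0) with hmx
    set my := y.isWF_support.min (HahnSeries.support_nonempty_iff.2 hy0) with hmy
    have hcx : x.coeff mx = x.leadingCoeff := (hahn_leadingCoeff_of_ne hx0).symm
    have hcoeff : 0 < (x + y).coeff mx := by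
      rcases lt_or_eq_of_le hle with hlt | heq
      · have hny : y.coeff mx = 0 := by
          by_contra hc
          exact absurd (Set.IsWF.min_le _ _ (by rwa [HahnSeries.mem_support])) (not_le.2 hlt)
        rw [HahnSeries.coeff_add, hny, add_zero, hcx]; exact hx
      · have hcy : y.coeff mx = y.leadingCoeff := by
          rw [heq]; exact (hahn_leadingCoeff_of_ne hy0).symm
        rw [HahnSeries.coeff_add, hcx, hcy]; exact add_pos hx hy
    have hmem : mx ∈ (x + y).support := by
      rw [HahnSeries.mem_support]; exact ne_of_gt hcoeff
    have hxy0 : x + y ≠ 0 := HahnSeries.support_nonempty_iff.1 ⟨mx, hmem⟩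
    have hminxy : (x + y).isWF_support.min (HahnSeries.support_nonempty_iff.2 hxy0) = mx := by
      apply le_antisymm (Set.IsWF.min_le _ _ hmem)
      have hmm := (x + y).isWF_support.min_mem (HahnSeries.support_nonempty_iff.2 hxy0)
      rcases HahnSeries.support_add_subset _ _ hmm with hmem' | hmem'
      · exact Set.IsWF.min_le _ _ hmem'
      · exact le_trans hle (Set.IsWF.min_le _ _ hmem')
    rw [hahn_leadingCoeff_of_ne hxy0, hminxy]
    exact hcoeff
  have ha0 : a ≠ 0 := by intro h; rw [h] at ha; simp at ha
  have hb0 : b ≠ 0 := by intro h; rw [h] at hb; simp at hb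
  rcases le_total (a.isWF_support.min (HahnSeries.support_nonempty_iff.2 ha0))
      (b.isWF_support.min (HahnSeries.support_nonempty_iff.2 hb0)) with hle | hle
  · exact key a b ha hb ha0 hb0 hle
  · rw [add_comm]; exact key b a hb ha hb0 ha0 hle

/-- The anti-lexicographic linear order on generalized power series:
`x` is positive iff its leading coefficient (the coefficient at the valuation `v x`,
i.e. at the largest element of the support) is positive. -/
instance instHahnLinearOrder : LinearOrder (HahnSeries Γ' k) where
  le x y := x = y ∨ 0 < (y - x).leadingCoeff
  lt x y := 0 < (y - x).leadingCoeff
  le_refl x := Or.inl rfl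
  le_trans x y z hxy hyz := by
    rcases hxy with rfl | hxy
    · exact hyz
    rcases hyz with rfl | hyz
    · exact Or.inr hxy
    · refine Or.inr ?_
      have := hahn_leadingCoeff_add_pos hyz hxy
      rwa [sub_add_sub_cancel] at this
  le_antisymm x y hxy hyx := by
    rcases hxy with rfl | hxy
    · rfl
    rcases hyx with rfl | hyx
    · rfl
    · exfalso
      have h1 : (x - y).leadingCoeff = -(y - x).leadingCoeff := by
        rw [← hahn_leadingCoeff_neg, neg_sub]
      rw [h1] at hyx
      exact absurd hxy (not_lt.2 (le_of_lt (neg_pos.1 hyx)))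
  lt_iff_le_not_ge x y := by
    constructor
    · intro h
      refine ⟨Or.inr h, ?_⟩
      rintro (rfl | h')
      · change 0 < (y - y).leadingCoeff at h
        rw [sub_self] at h
        simp at h
      · have h1 : (x - y).leadingCoeff = -(y - x).leadingCoeff := by
          rw [← hahn_leadingCoeff_neg, neg_sub]
        rw [h1] at h'
        exact absurd h (not_lt.2 (le_of_lt (neg_pos.1 h')))
    · rintro ⟨hle, hnot⟩
      rcases hle with rfl | h
      · exact absurd (Or.inl rfl) hnot
      · exact h
  le_total x y := by
    by_cases h : x = y
    · exact Or.inl (Or.inl h)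
    · have h0 : y - x ≠ 0 := sub_ne_zero.2 (Ne.symm h)
      have hlc : (y - x).leadingCoeff ≠ 0 := HahnSeries.leadingCoeff_ne_zero.2 h0
      rcases lt_or_gt_of_ne hlc with hneg | hpos
      · refine Or.inr (Or.inr ?_)
        rw [show x - y = -(y - x) from (neg_sub y x).symm, hahn_leadingCoeff_neg]
        exact neg_pos.2 hneg
      · exact Or.inl (Or.inr hpos)
  toDecidableLE := fun _ _ => Classical.dec _

/-- With the anti-lexicographic order, `k((G))` is a linearly ordered abelian group. -/
instance instHahnLOACG : IsOrderedAddMonoid (HahnSeries Γ' k) where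
  add_le_add_left := by
    intro x y hxy c
    rcases hxy with rfl | h
    · exact le_refl _
    · exact Or.inr (by first | rwa [add_sub_add_left_eq_sub] | rwa [add_sub_add_right_eq_sub])

theorem hahn_lt_iff (x y : HahnSeries Γ' k) : x < y ↔ 0 < (y - x).leadingCoeff := Iff.rfl

theorem hahn_single_pos (a : Γ') : (0 : HahnSeries Γ' k) < HahnSeries.single a 1 := by
  rw [hahn_lt_iff, sub_zero, HahnSeries.leadingCoeff_of_single]
  exact one_pos

theorem hahn_single_lt_single {a b : Γ'} (hab : b < a) :
    (HahnSeries.single a 1 : HahnSeries Γ' k) < HahnSeries.single b 1 := by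
  rw [hahn_lt_iff]
  set δ : HahnSeries Γ' k := HahnSeries.single b 1 - HahnSeries.single a 1 with hδdef
  have hne : b ≠ a := ne_of_lt hab
  have hb : δ.coeff b = 1 := by
    rw [hδdef, HahnSeries.coeff_sub, HahnSeries.coeff_single_same,
      HahnSeries.coeff_single_of_ne hne, sub_zero]
  have hbmem : b ∈ δ.support := by rw [HahnSeries.mem_support, hb]; exact one_ne_zero
  have hδ : δ ≠ 0 := HahnSeries.support_nonempty_iff.1 ⟨b, hbmem⟩
  have hsub : δ.support ⊆ {b, a} := by
    intro γ hγ
    rw [HahnSeries.mem_support] at hγ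
    by_contra hγ'
    simp only [Set.mem_insert_iff, Set.mem_singleton_iff, not_or] at hγ'
    apply hγ
    rw [hδdef, HahnSeries.coeff_sub, HahnSeries.coeff_single_of_ne hγ'.1,
      HahnSeries.coeff_single_of_ne hγ'.2, sub_zero]
  have hmin : δ.isWF_support.min (HahnSeries.support_nonempty_iff.2 hδ) = b := by
    have hmem := δ.isWF_support.min_mem (HahnSeries.support_nonempty_iff.2 hδ)
    have hle := δ.isWF_support.min_le (HahnSeries.support_nonempty_iff.2 hδ) hbmem
    rcases hsub hmem with h | h
    · exact h
    · exact absurd (h ▸ hle) (not_le.2 hab)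
  rw [hahn_leadingCoeff_of_ne hδ, hmin, hb]
  exact one_pos

end HahnOrder

section Series

variable {k : Type*} [Field k] [LinearOrder k] [IsStrictOrderedRing k] {G : Type*} [CommGroup G] [LinearOrder G] [IsOrderedMonoid G]

/-- The summable family `n ↦ (-1)^n/(n+1) • ε^(n+1)` (`ε` of positive order). -/
def logFamily (ε : HahnSeries (gdual G) k) (hε : 0 < ε.orderTop) :
    HahnSeries.SummableFamily (gdual G) k ℕ where
  toFun n := ((-1 : k) ^ n / ((n : k) + 1)) • ε ^ (n + 1)
  isPWO_iUnion_support' := by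
    refine ((HahnSeries.SummableFamily.powers ε).isPWO_iUnion_support).mono ?_
    intro γ hγ
    rw [Set.mem_iUnion] at hγ ⊢
    obtain ⟨n, hn⟩ := hγ
    refine ⟨n + 1, ?_⟩
    rw [HahnSeries.mem_support] at hn ⊢
    intro h
    apply hn
    show (((-1 : k) ^ n / ((n : k) + 1)) • ε ^ (n + 1)).coeff γ = 0
    rw [HahnSeries.coeff_smul]
    show ((-1 : k) ^ n / ((n : k) + 1)) • (ε ^ (n + 1)).coeff γ = 0
    rw [show (ε ^ (n + 1)).coeff γ = 0 by
        rw [← HahnSeries.SummableFamily.powers_of_orderTop_pos hε]; exact h, smul_zero]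
  finite_co_support' g := by
    have h := (HahnSeries.SummableFamily.powers ε).finite_co_support g
    refine Set.Finite.subset (h.preimage (Set.injOn_of_injective Nat.succ_injective)) ?_
    intro n hn
    simp only [Set.mem_preimage, Set.mem_setOf_eq] at hn ⊢
    intro h0
    apply hn
    show (((-1 : k) ^ n / ((n : k) + 1)) • ε ^ (n + 1)).coeff g = 0
    rw [HahnSeries.coeff_smul]
    have : ((HahnSeries.SummableFamily.powers ε) (Nat.succ n)).coeff g = 0 := h0
    rw [show (ε ^ (n + 1)).coeff g = 0 by
        rw [← HahnSeries.SummableFamily.powers_of_orderTop_pos hε]; exact this, smul_zero]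

/-- The logarithm on 1-units: `1 + ε ↦ Σ_{i ≥ 1} (-1)^(i-1) ε^i / i`
(for `ε` supported on `G^{<1}`; junk value `0` otherwise). -/
def logOneUnit (ε : HahnSeries (gdual G) k) : HahnSeries (gdual G) k :=
  if hε : 0 < ε.orderTop then (logFamily ε hε).hsum else 0

/-- The canonical extension of an order-preserving embedding `ψ : G₁ → G₂` to the fields of
generalized power series, applying `ψ` to every monomial (junk value `0` if `ψ` is not
order-preserving). -/
def extMap {k : Type*} [Field k] [LinearOrder k] [IsStrictOrderedRing k] {G₁ G₂ : Type*} [CommGroup G₁] [LinearOrder G₁] [IsOrderedMonoid G₁]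
    [CommGroup G₂] [LinearOrder G₂] [IsOrderedMonoid G₂] (ψ : G₁ → G₂) :
    HahnSeries (gdual G₁) k → HahnSeries (gdual G₂) k :=
  if h : StrictMono ψ then
    HahnSeries.embDomain
      (OrderEmbedding.ofStrictMono (fun γ => toGd (ψ (toG γ)))
        (fun a b hab => show toGd (ψ (toG a)) < toGd (ψ (toG b)) from
          h (show toG b < toG a from hab)))
  else fun _ => 0

/-- The additive subgroup `k((G^{>1}))` of the series supported on `G^{>1}`. -/
def largeSeries (k : Type*) [Field k] [LinearOrder k] [IsStrictOrderedRing k] (G : Type*) [CommGroup G] [LinearOrder G] [IsOrderedMonoid G] :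
    AddSubgroup (HahnSeries (gdual G) k) where
  carrier := {f | ∀ γ ∈ f.support, γ < (0 : gdual G)}
  zero_mem' := by intro γ hγ; rw [HahnSeries.support_zero] at hγ; exact absurd hγ (Set.notMem_empty γ)
  add_mem' := by
    intro a b ha hb γ hγ
    rcases HahnSeries.support_add_subset _ _ hγ with h | h
    exacts [ha γ h, hb γ h]
  neg_mem' := by
    intro a ha γ hγ
    rw [HahnSeries.support_neg] at hγ
    exact ha γ hγ

theorem mem_largeSeries {f : HahnSeries (gdual G) k} :
    f ∈ largeSeries k G ↔ ∀ γ ∈ f.support, γ < (0 : gdual G) := Iff.rfl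

/-- `log : (k^{>0}, ·) → (k, +)` is an order-preserving group embedding. -/
structure IsResidueLog (lg : k → k) : Prop where
  map_mul : ∀ a b : k, 0 < a → 0 < b → lg (a * b) = lg a + lg b
  strictMonoOn : StrictMonoOn lg (Set.Ioi 0)

/-- A prelogarithmic section of `k((G))`: an order-preserving group embedding
`l : (G, ·) → (k((G^{>1})), +)`. -/
structure IsPrelogSection (l : G → HahnSeries (gdual G) k) : Prop where
  supp_large : ∀ g : G, l g ∈ largeSeries k G
  map_mul : ∀ g h : G, l (g * h) = l g + l h
  strictMono : StrictMono l

/-- The prelogarithm associated to a prelogarithmic section `l` and a logarithm `lg` on the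
residue field: `L(g·a·(1+ε)) = l(g) + log(a) + Σ (-1)^(i-1) ε^i/i`. -/
def prelogL (lg : k → k) (l : G → HahnSeries (gdual G) k)
    (α : HahnSeries (gdual G) k) : HahnSeries (gdual G) k :=
  l (toG α.order) + HahnSeries.C (lg α.leadingCoeff) +
    logOneUnit ((HahnSeries.single α.order α.leadingCoeff)⁻¹ * α - 1)

/-- The group of exponentials `G^# = e[k((G^{>1}))]`, a multiplicative copy of the ordered
additive group `k((G^{>1}))`. The element `e(α)` is `Multiplicative.ofAdd ⟨α, _⟩`. -/
abbrev Gsharp (k : Type*) [Field k] [LinearOrder k] [IsStrictOrderedRing k] (G : Type*) [CommGroup G] [LinearOrder G] [IsOrderedMonoid G] :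
    Type _ := Multiplicative ↥(largeSeries k G)

/-- The embedding `ι : G → G^#`, `ι(g) := e(l(g))`. -/
def iotaSharp (l : G → HahnSeries (gdual G) k) (hl : ∀ g, l g ∈ largeSeries k G) (g : G) :
    Gsharp k G :=
  Multiplicative.ofAdd (⟨l g, hl g⟩ : ↥(largeSeries k G))

/-- The prelogarithmic section `l^#` of `k((G^#))`: `l^#(e(α)) := ι(α)`, where
`ι : k((G)) → k((G^#))` is the canonical extension of `ι : G → G^#`. -/
def lsharpFun (l : G → HahnSeries (gdual G) k) (hl : ∀ g, l g ∈ largeSeries k G)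
    (x : Gsharp k G) : HahnSeries (gdual (Gsharp k G)) k :=
  extMap (iotaSharp l hl) ((Multiplicative.toAdd x : ↥(largeSeries k G)) : HahnSeries (gdual G) k)

/-- The induced map `ψ^# : G₁^# → G₂^#`, `ψ^#(e(α)) := e(ψ(α))` (junk value `1` if the
canonical extension of `ψ` does not map `k((G₁^{>1}))` into `k((G₂^{>1}))`). -/
def psiSharp {k : Type*} [Field k] [LinearOrder k] [IsStrictOrderedRing k] {G₁ G₂ : Type*} [CommGroup G₁] [LinearOrder G₁] [IsOrderedMonoid G₁]
    [CommGroup G₂] [LinearOrder G₂] [IsOrderedMonoid G₂] (ψ : G₁ → G₂) (x : Gsharp k G₁) : Gsharp k G₂ :=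
  if h : ∀ f ∈ largeSeries k G₁, extMap ψ f ∈ largeSeries k G₂ then
    Multiplicative.ofAdd
      (⟨extMap ψ ((Multiplicative.toAdd x : ↥(largeSeries k G₁)) : HahnSeries (gdual G₁) k),
        h _ (Multiplicative.toAdd x).2⟩ : ↥(largeSeries k G₂))
  else 1

/-- Condition (†) for subgroups `U ⊆ H` of `G`:
`l(H) < |f|` for every nonzero `f ∈ k((H^{>U}))`. -/
def CondDagger (l : G → HahnSeries (gdual G) k) (U H : Subgroup G) : Prop :=
  ∀ h ∈ H, ∀ f : HahnSeries (gdual G) k, f ≠ 0 →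
    (∀ γ ∈ f.support, toG γ ∈ H ∧ ∀ u ∈ U, u < toG γ) → l h < |f|

/-- The growth axiom for a subgroup `H` of `G`:
`l(H) < |f|` for every nonzero `f ∈ k((H^{>1}))`. -/
def GrowthAxiom (l : G → HahnSeries (gdual G) k) (H : Subgroup G) : Prop :=
  CondDagger l (⊥ : Subgroup G) H

theorem mem_large_of_gt {f : HahnSeries (gdual G) k} {U H : Subgroup G}
    (hf : ∀ γ ∈ f.support, toG γ ∈ H ∧ ∀ u ∈ U, u < toG γ) : f ∈ largeSeries k G :=
  fun γ hγ => show (1 : G) < toG γ from (hf γ hγ).2 1 U.one_mem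

/-- The set `H^{#,U} = ι(H)·e[k((H^{>U}))] ⊆ G^#`. -/
def sharpProdSet (l : G → HahnSeries (gdual G) k) (hl : ∀ g, l g ∈ largeSeries k G)
    (U H : Subgroup G) : Set (Gsharp k G) :=
  {x | ∃ h ∈ H, ∃ f : HahnSeries (gdual G) k,
    ∃ hf : ∀ γ ∈ f.support, toG γ ∈ H ∧ ∀ u ∈ U, u < toG γ,
    x = iotaSharp l hl h *
      Multiplicative.ofAdd (⟨f, mem_large_of_gt hf⟩ : ↥(largeSeries k G))}

end Series

section Hahn

variable (k : Type*) [Field k] [LinearOrder k] [IsStrictOrderedRing k] {Γ : Type*} [LinearOrder Γ]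

/-- The Hahn group `Γ^k` of formal products `∏_γ x_γ^(g γ)` with anti well-ordered support,
ordered anti-lexicographically, realized as the multiplicative copy of the additive group of
Hahn series over `Γᵒᵈ` with coefficients in `k`. -/
abbrev HahnGroup (Γ : Type*) [LinearOrder Γ] (k : Type*) [Field k] [LinearOrder k] [IsStrictOrderedRing k] : Type _ :=
  Multiplicative (HahnSeries Γᵒᵈ k)

/-- The monomial `x_γ` in the Hahn group `Γ^k`. -/
def xMon (γ : Γ) : HahnGroup Γ k :=
  Multiplicative.ofAdd (HahnSeries.single (OrderDual.toDual γ) (1 : k))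

/-- The prelogarithmic section `l_σ` on `k((Γ^k))` induced by `σ : Γ → Γ`:
`l_σ(∏_γ x_γ^(g γ)) := Σ_γ (g γ)·x_(σ γ)` (junk value `0` if `σ` is not strictly
order-preserving). -/
def sigmaSection (σ : Γ → Γ) :
    HahnGroup Γ k → HahnSeries (gdual (HahnGroup Γ k)) k :=
  if hσ : StrictMono σ then fun g =>
    HahnSeries.embDomain
      (OrderEmbedding.ofStrictMono
        (fun γ : Γᵒᵈ => toGd (xMon k (σ (OrderDual.ofDual γ))))
        (fun a b hab =>
          show toGd (xMon k (σ (OrderDual.ofDual a))) < toGd (xMon k (σ (OrderDual.ofDual b)))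
          from hahn_single_lt_single
            (show OrderDual.toDual (σ (OrderDual.ofDual a)) <
                OrderDual.toDual (σ (OrderDual.ofDual b)) from
              hσ (show OrderDual.ofDual b < OrderDual.ofDual a from hab))))
      (Multiplicative.toAdd g)
  else fun _ => 0

/-- The lift `ψ_σ : Γ^k → Γ^k` of `σ : Γ → Γ`, `ψ_σ(∏_γ x_γ^(g γ)) := ∏_γ x_(σ γ)^(g γ)`
(junk value `id` if `σ` is not strictly order-preserving). -/
def sigmaAuto (σ : Γ → Γ) : HahnGroup Γ k → HahnGroup Γ k :=
  if hσ : StrictMono σ then fun g =>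
    Multiplicative.ofAdd
      (HahnSeries.embDomain
        (OrderEmbedding.ofStrictMono
          (fun γ : Γᵒᵈ => OrderDual.toDual (σ (OrderDual.ofDual γ)))
          (fun a b hab =>
            show OrderDual.toDual (σ (OrderDual.ofDual a)) <
                OrderDual.toDual (σ (OrderDual.ofDual b)) from
              hσ (show OrderDual.ofDual b < OrderDual.ofDual a from hab)))
        (Multiplicative.toAdd g))
  else id

end Hahn

section AuxDev
variable {k : Type*} [Field k] [LinearOrder k] [IsStrictOrderedRing k] {G : Type*} [CommGroup G] [LinearOrder G] [IsOrderedMonoid G]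

theorem hahn_coeff_order_ne_zero {x : HahnSeries (gdual G) k} (hx : x ≠ 0) :
    x.coeff x.order ≠ 0 :=
  HahnSeries.coeff_order_eq_zero.not.2 hx

theorem hahn_pos_iff {x : HahnSeries (gdual G) k} : 0 < x ↔ 0 < x.leadingCoeff := by
  rw [hahn_lt_iff, sub_zero]

theorem coeff_zero_of_pos_orderTop {x : HahnSeries (gdual G) k} (h : 0 < x.orderTop)
    {γ : gdual G} (hγ : γ ≤ 0) : x.coeff γ = 0 :=
  HahnSeries.coeff_eq_zero_of_lt_orderTop (lt_of_le_of_lt (by exact_mod_cast hγ) h)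

theorem pos_orderTop_of_coeff {x : HahnSeries (gdual G) k}
    (h : ∀ γ : gdual G, γ ≤ 0 → x.coeff γ = 0) : 0 < x.orderTop := by
  by_cases hx : x = 0
  · simp [hx]
  · rw [HahnSeries.zero_lt_orderTop_iff hx]
    by_contra hc
    exact hahn_coeff_order_ne_zero hx (h _ (not_lt.1 hc))

theorem hahn_lc_mul {x y : HahnSeries (gdual G) k} (hx : x ≠ 0) (hy : y ≠ 0) :
    (x * y).leadingCoeff = x.leadingCoeff * y.leadingCoeff := by
  rw [HahnSeries.leadingCoeff_eq, HahnSeries.order_mul hx hy,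
    HahnSeries.coeff_mul_order_add_order]

theorem hahn_mul_pos {x y : HahnSeries (gdual G) k} (hx : 0 < x) (hy : 0 < y) : 0 < x * y := by
  rw [hahn_pos_iff] at hx hy ⊢
  rw [hahn_lc_mul (HahnSeries.leadingCoeff_ne_zero.1 hx.ne') (HahnSeries.leadingCoeff_ne_zero.1 hy.ne')]
  exact mul_pos hx hy

end AuxDev
section AuxDev2
variable {k : Type*} [Field k] [LinearOrder k] [IsStrictOrderedRing k] {G : Type*} [CommGroup G] [LinearOrder G] [IsOrderedMonoid G]

theorem hahn_single_inv (g : gdual G) {a : k} (ha : a ≠ 0) :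
    (HahnSeries.single g a)⁻¹ = HahnSeries.single (-g) a⁻¹ := by
  symm
  apply eq_inv_of_mul_eq_one_left
  rw [HahnSeries.single_mul_single, neg_add_cancel, inv_mul_cancel₀ ha]
  exact HahnSeries.C_one

theorem one_add_ne_zero {ε : HahnSeries (gdual G) k} (hε : 0 < ε.orderTop) :
    (1 : HahnSeries (gdual G) k) + ε ≠ 0 := by
  intro h
  have h0 : ((1 : HahnSeries (gdual G) k) + ε).coeff 0 = 1 := by
    rw [HahnSeries.coeff_add, HahnSeries.coeff_one, if_pos rfl,
      coeff_zero_of_pos_orderTop hε le_rfl, add_zero]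
  rw [h, HahnSeries.coeff_zero] at h0
  exact one_ne_zero h0.symm

theorem orderTop_one_add {ε : HahnSeries (gdual G) k} (hε : 0 < ε.orderTop) :
    ((1 : HahnSeries (gdual G) k) + ε).orderTop = 0 := by
  rw [HahnSeries.orderTop_add_eq_left (by rw [HahnSeries.orderTop_one]; exact hε),
    HahnSeries.orderTop_one]

theorem lc_one_add {ε : HahnSeries (gdual G) k} (hε : 0 < ε.orderTop) :
    ((1 : HahnSeries (gdual G) k) + ε).leadingCoeff = 1 := by
  rw [HahnSeries.leadingCoeff_add_eq_left (by rw [HahnSeries.orderTop_one]; exact hε),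
    HahnSeries.leadingCoeff_one]

theorem order_one_add {ε : HahnSeries (gdual G) k} (hε : 0 < ε.orderTop) :
    ((1 : HahnSeries (gdual G) k) + ε).order = 0 := by
  have h := HahnSeries.order_eq_orderTop_of_ne_zero (one_add_ne_zero hε)
  rw [orderTop_one_add hε] at h
  exact_mod_cast h

theorem form_order {g : gdual G} {a : k} (ha : a ≠ 0) {ε : HahnSeries (gdual G) k}
    (hε : 0 < ε.orderTop) :
    (HahnSeries.single g a * (1 + ε)).order = g ∧
      (HahnSeries.single g a * (1 + ε)).leadingCoeff = a ∧
      HahnSeries.single g a * (1 + ε) ≠ 0 := by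
  have hne : HahnSeries.single g a * (1 + ε) ≠ 0 :=
    mul_ne_zero (HahnSeries.single_ne_zero ha) (one_add_ne_zero hε)
  refine ⟨?_, ?_, hne⟩
  · rw [HahnSeries.order_mul (HahnSeries.single_ne_zero ha) (one_add_ne_zero hε),
      HahnSeries.order_single ha, order_one_add hε, add_zero]
  · rw [hahn_lc_mul (HahnSeries.single_ne_zero ha) (one_add_ne_zero hε),
      HahnSeries.leadingCoeff_of_single, lc_one_add hε, mul_one]

theorem form_prelogL (lg : k → k) (l : G → HahnSeries (gdual G) k)
    {g : gdual G} {a : k} (ha : a ≠ 0) {ε : HahnSeries (gdual G) k} (hε : 0 < ε.orderTop) :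
    prelogL lg l (HahnSeries.single g a * (1 + ε)) =
      l (toG g) + HahnSeries.C (lg a) + logOneUnit ε := by
  obtain ⟨ho, hlc, -⟩ := form_order ha hε
  rw [prelogL, ho, hlc]
  congr 1
  rw [inv_mul_cancel_left₀ (HahnSeries.single_ne_zero ha), add_sub_cancel_left]

theorem hahn_decomp {α : HahnSeries (gdual G) k} (hα : α ≠ 0) :
    ∃ ε : HahnSeries (gdual G) k, 0 < ε.orderTop ∧
      α = HahnSeries.single α.order α.leadingCoeff * (1 + ε) := by
  have hlc : α.leadingCoeff ≠ 0 := HahnSeries.leadingCoeff_ne_zero.2 hα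
  refine ⟨(HahnSeries.single α.order α.leadingCoeff)⁻¹ * α - 1, ?_, ?_⟩
  · have h := HahnSeries.unit_aux α (inv_mul_cancel₀ hlc) _ (neg_add_cancel α.order)
    have : (HahnSeries.single α.order α.leadingCoeff)⁻¹ * α - 1 =
        -(1 - HahnSeries.single (-α.order) α.leadingCoeff⁻¹ * α) := by
      rw [hahn_single_inv _ hlc]; ring
    rw [this, HahnSeries.orderTop_neg]
    exact h
  · rw [add_sub_cancel, mul_inv_cancel_left₀ (HahnSeries.single_ne_zero hlc)]

end AuxDev2
section AuxDev3
variable {k : Type*} [Field k] [LinearOrder k] [IsStrictOrderedRing k] {G : Type*} [CommGroup G] [LinearOrder G] [IsOrderedMonoid G]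

theorem otop_pow_pos {x : HahnSeries (gdual G) k} (hx : 0 < x.orderTop) (n : ℕ) :
    0 < (x ^ (n + 1)).orderTop := by
  induction n with
  | zero => simpa using hx
  | succ m ih =>
    rw [pow_succ]
    refine lt_of_lt_of_le ?_ HahnSeries.orderTop_add_le_mul
    calc (0 : WithTop (gdual G)) < (x ^ (m + 1)).orderTop := ih
    _ = (x ^ (m + 1)).orderTop + 0 := (add_zero _).symm
    _ ≤ (x ^ (m + 1)).orderTop + x.orderTop := add_le_add_right hx.le _

theorem logFamily_coeff {ε : HahnSeries (gdual G) k} (hε : 0 < ε.orderTop) (n : ℕ)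
    (γ : gdual G) :
    ((logFamily ε hε) n).coeff γ = ((-1 : k) ^ n / ((n : k) + 1)) * (ε ^ (n + 1)).coeff γ := by
  show (((-1 : k) ^ n / ((n : k) + 1)) • ε ^ (n + 1)).coeff γ = _
  rw [HahnSeries.coeff_smul, smul_eq_mul]

theorem logOneUnit_eq {ε : HahnSeries (gdual G) k} (hε : 0 < ε.orderTop) :
    logOneUnit ε = (logFamily ε hε).hsum := dif_pos hε

theorem logOneUnit_zero' : logOneUnit (0 : HahnSeries (gdual G) k) = 0 := by
  rw [logOneUnit_eq (by simp [HahnSeries.orderTop_zero] : 0 < (0 : HahnSeries (gdual G) k).orderTop)]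
  ext γ
  rw [HahnSeries.SummableFamily.coeff_hsum]
  rw [HahnSeries.coeff_zero, finsum_eq_zero_of_forall_eq_zero]
  intro n
  rw [logFamily_coeff, zero_pow (Nat.succ_ne_zero n), HahnSeries.coeff_zero, mul_zero]

theorem logOneUnit_orderTop_pos {ε : HahnSeries (gdual G) k} (hε : 0 < ε.orderTop) :
    0 < (logOneUnit ε).orderTop := by
  rw [logOneUnit_eq hε]
  refine pos_orderTop_of_coeff fun γ hγ => ?_
  rw [HahnSeries.SummableFamily.coeff_hsum, finsum_eq_zero_of_forall_eq_zero]
  intro n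
  rw [logFamily_coeff, coeff_zero_of_pos_orderTop (otop_pow_pos hε n) hγ, mul_zero]

theorem logOneUnit_coeff_le {ε : HahnSeries (gdual G) k} (hε : 0 < ε.orderTop) (hne : ε ≠ 0)
    {γ : gdual G} (hγ : γ ≤ ε.order) : (logOneUnit ε).coeff γ = ε.coeff γ := by
  have horder : 0 < ε.order := (HahnSeries.zero_lt_orderTop_iff hne).1 hε
  rw [logOneUnit_eq hε]
  rw [HahnSeries.SummableFamily.coeff_hsum_eq_sum_of_subset (t := {0})]
  · rw [Finset.sum_singleton, logFamily_coeff]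
    norm_num
  · intro n hn
    simp only [Set.mem_setOf_eq, logFamily_coeff] at hn
    rcases Nat.eq_zero_or_pos n with rfl | hnpos
    · exact Finset.mem_singleton_self 0
    · exfalso
      apply hn
      have hpow : (ε ^ (n + 1)).coeff γ = 0 := by
        apply HahnSeries.coeff_eq_zero_of_lt_orderTop
        rw [← HahnSeries.order_eq_orderTop_of_ne_zero (pow_ne_zero _ hne), HahnSeries.order_pow]
        have h2 : ε.order < (n + 1) • ε.order := by
          have : 1 < n + 1 := by omega
          calc ε.order = 1 • ε.order := (one_nsmul _).symm
          _ < (n + 1) • ε.order := nsmul_lt_nsmul_left horder this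
        exact_mod_cast lt_of_le_of_lt hγ h2
      rw [hpow, mul_zero]

theorem logOneUnit_ne_zero {ε : HahnSeries (gdual G) k} (hε : 0 < ε.orderTop) (hne : ε ≠ 0) :
    logOneUnit ε ≠ 0 := by
  intro h
  have := logOneUnit_coeff_le hε hne (le_refl ε.order)
  rw [h, HahnSeries.coeff_zero] at this
  exact hahn_coeff_order_ne_zero hne this.symm

theorem logOneUnit_order {ε : HahnSeries (gdual G) k} (hε : 0 < ε.orderTop) (hne : ε ≠ 0) :
    (logOneUnit ε).order = ε.order := by
  apply le_antisymm
  · apply HahnSeries.order_le_of_coeff_ne_zero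
    rw [logOneUnit_coeff_le hε hne (le_refl ε.order)]
    exact hahn_coeff_order_ne_zero hne
  · by_contra hc
    push_neg at hc
    have h0 := hahn_coeff_order_ne_zero (logOneUnit_ne_zero hε hne)
    rw [logOneUnit_coeff_le hε hne hc.le] at h0
    exact h0 (HahnSeries.coeff_eq_zero_of_lt_order hc)

theorem logOneUnit_lc {ε : HahnSeries (gdual G) k} (hε : 0 < ε.orderTop) (hne : ε ≠ 0) :
    (logOneUnit ε).leadingCoeff = ε.leadingCoeff := by
  rw [HahnSeries.leadingCoeff_eq, logOneUnit_order hε hne,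
    logOneUnit_coeff_le hε hne (le_refl ε.order), HahnSeries.leadingCoeff_eq]

end AuxDev3
section AuxPoly
open MvPolynomial
variable {k : Type*} [Field k] [LinearOrder k] [IsStrictOrderedRing k]

/-- The polynomial `X + Y + XY`. -/
noncomputable def Ap (k : Type*) [Field k] [LinearOrder k] [IsStrictOrderedRing k] : MvPolynomial Bool k :=
  X true + X false + X true * X false

/-- The truncated `log((1+X)(1+Y)) - log(1+X) - log(1+Y)`. -/
noncomputable def Dp (k : Type*) [Field k] [LinearOrder k] [IsStrictOrderedRing k] (N : ℕ) : MvPolynomial Bool k :=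
  ∑ m ∈ Finset.range N, MvPolynomial.C ((-1 : k) ^ m / ((m : k) + 1)) *
    (Ap k ^ (m + 1) - X true ^ (m + 1) - X false ^ (m + 1))

theorem geom_aux {R : Type*} [CommRing R] (Z : R) (N : ℕ) :
    (1 + Z) * ∑ m ∈ Finset.range N, (-Z) ^ m = 1 - (-Z) ^ N := by
  have h := geom_sum_mul (-Z) N
  have h2 : (1 + Z) * ∑ m ∈ Finset.range N, (-Z) ^ m
      = -((∑ i ∈ Finset.range N, (-Z) ^ i) * (-Z - 1)) := by ring
  rw [h2, h]; ring

theorem lowzero_mul {P Q : MvPolynomial Bool k} {a b : ℕ}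
    (hP : ∀ d : Bool →₀ ℕ, d true + d false < a → coeff d P = 0)
    (hQ : ∀ d : Bool →₀ ℕ, d true + d false < b → coeff d Q = 0) :
    ∀ d : Bool →₀ ℕ, d true + d false < a + b → coeff d (P * Q) = 0 := by
  intro d hd
  rw [MvPolynomial.coeff_mul]
  apply Finset.sum_eq_zero
  rintro ⟨u, v⟩ huv
  rw [Finset.HasAntidiagonal.mem_antidiagonal] at huv
  have hsum : (u true + u false) + (v true + v false) = d true + d false := by
    rw [← huv]; simp only [Finsupp.add_apply]; ring
  by_cases h : u true + u false < a
  · rw [hP u h, zero_mul]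
  · rw [hQ v (by omega), mul_zero]

theorem lowzero_Ap (d : Bool →₀ ℕ) (hd : d true + d false < 1) : coeff d (Ap k) = 0 := by
  have hd0 : d = 0 := by
    ext b
    cases b <;> simp <;> omega
  have h : constantCoeff (Ap k) = 0 := by simp [Ap]
  rw [constantCoeff_eq] at h
  rw [hd0]
  exact h

theorem lowzero_Ap_pow (m : ℕ) (d : Bool →₀ ℕ) (hd : d true + d false < m) :
    coeff d (Ap k ^ m) = 0 := by
  induction m generalizing d with
  | zero => omega
  | succ n ih =>
    rw [pow_succ, mul_comm]
    exact lowzero_mul lowzero_Ap ih d (by omega)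

theorem coeff_pderiv (s : Bool) (P : MvPolynomial Bool k) (e : Bool →₀ ℕ) :
    coeff e (pderiv s P) = ((e s : k) + 1) * coeff (e + Finsupp.single s 1) P := by
  induction P using MvPolynomial.induction_on' with
  | add p q hp hq => simp only [map_add, MvPolynomial.coeff_add, hp, hq]; ring
  | monomial d a =>
    rw [pderiv_monomial, MvPolynomial.coeff_monomial, MvPolynomial.coeff_monomial]
    rcases Nat.eq_zero_or_pos (d s) with h0 | hpos
    · have hne : d ≠ e + Finsupp.single s 1 := by
        intro h
        have h2 := congrArg (fun f : Bool →₀ ℕ => f s) h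
        simp [Finsupp.add_apply, h0] at h2
      rw [if_neg hne, h0]
      simp
    · have hiff : d - Finsupp.single s 1 = e ↔ d = e + Finsupp.single s 1 := by
        constructor
        · intro h
          rw [← h, tsub_add_cancel_of_le (Finsupp.single_le_iff.2 hpos)]
        · intro h
          rw [h, add_tsub_cancel_right]
      by_cases h : d - Finsupp.single s 1 = e
      · rw [if_pos h, if_pos (hiff.1 h)]
        have hds : d s = e s + 1 := by
          rw [hiff.1 h]
          simp [Finsupp.add_apply]
        rw [hds]
        push_cast
        ring
      · rw [if_neg h, if_neg (fun hc => h (hiff.2 hc)), mul_zero]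

theorem one_add_X_mul_one_add_X (s : Bool) :
    (1 + X s) * (1 + X (!s)) = 1 + Ap k := by
  cases s <;> simp only [Bool.not_false, Bool.not_true, Ap] <;> ring

theorem pd_inner (s : Bool) (m : ℕ) :
    pderiv s (Ap k ^ (m + 1) - X true ^ (m + 1) - X false ^ (m + 1)) =
      ((m + 1 : ℕ) : MvPolynomial Bool k) * (Ap k ^ m * (1 + X (!s)) - X s ^ m) := by
  cases s <;>
    · simp [Ap, pderiv_pow, pderiv_mul]
      ring

theorem c_cancel (m : ℕ) :
    (MvPolynomial.C ((-1 : k) ^ m / ((m : k) + 1)) : MvPolynomial Bool k) *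
      ((m + 1 : ℕ) : MvPolynomial Bool k) = (-1 : MvPolynomial Bool k) ^ m := by
  rw [← map_natCast (MvPolynomial.C : k →+* MvPolynomial Bool k) (m + 1), ← map_mul]
  push_cast
  rw [div_mul_cancel₀ _ (Nat.cast_add_one_ne_zero m)]
  rw [map_pow, map_neg, map_one]

theorem term_deriv (s : Bool) (m : ℕ) :
    (1 + X s) * pderiv s (MvPolynomial.C ((-1 : k) ^ m / ((m : k) + 1)) *
      (Ap k ^ (m + 1) - X true ^ (m + 1) - X false ^ (m + 1))) =
    (-1 : MvPolynomial Bool k) ^ m * ((1 + Ap k) * Ap k ^ m - (1 + X s) * X s ^ m) := by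
  rw [pderiv_C_mul, pd_inner]
  rw [← c_cancel (k := k) m, ← one_add_X_mul_one_add_X s]
  ring

theorem pderiv_Dp (s : Bool) (N : ℕ) :
    (1 + X s) * pderiv s (Dp k N) = (-X s) ^ N - (-Ap k) ^ N := by
  rw [Dp, map_sum, Finset.mul_sum]
  rw [Finset.sum_congr rfl fun m _ => term_deriv s m]
  have hsplit : ∑ m ∈ Finset.range N, (-1 : MvPolynomial Bool k) ^ m *
      ((1 + Ap k) * Ap k ^ m - (1 + X s) * X s ^ m) =
      (1 + Ap k) * (∑ m ∈ Finset.range N, (-Ap k) ^ m) -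
      (1 + X s) * (∑ m ∈ Finset.range N, (-X s) ^ m) := by
    rw [Finset.mul_sum, Finset.mul_sum, ← Finset.sum_sub_distrib]
    refine Finset.sum_congr rfl fun m _ => ?_
    rw [neg_pow (Ap k), neg_pow (X s : MvPolynomial Bool k)]
    ring
  rw [hsplit, geom_aux, geom_aux]
  ring

theorem hm1pow (N : ℕ) : (-1 : MvPolynomial Bool k) ^ N = MvPolynomial.C ((-1 : k) ^ N) := by
  rw [map_pow, map_neg, map_one]

theorem single_sum (s : Bool) (N : ℕ) :
    (Finsupp.single s N) true + (Finsupp.single s N) false = N := by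
  cases s <;> simp

theorem pderiv_Dp_coeff {N : ℕ} (s : Bool) :
    ∀ n (e : Bool →₀ ℕ), e s = n → e true + e false < N →
      coeff e (pderiv s (Dp k N)) = 0 := by
  have hR : ∀ e : Bool →₀ ℕ, e true + e false < N →
      coeff e ((-X s) ^ N - (-Ap k) ^ N : MvPolynomial Bool k) = 0 := by
    intro e he
    rw [MvPolynomial.coeff_sub, neg_pow (X s : MvPolynomial Bool k), neg_pow (Ap k), hm1pow,
      MvPolynomial.coeff_C_mul, MvPolynomial.coeff_C_mul, lowzero_Ap_pow N e he, MvPolynomial.coeff_X_pow]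
    rw [if_neg fun hc => absurd (hc ▸ single_sum s N) (by omega)]
    ring
  have hexp : ∀ e : Bool →₀ ℕ,
      coeff e (pderiv s (Dp k N)) + coeff e (X s * pderiv s (Dp k N)) =
      coeff e ((-X s) ^ N - (-Ap k) ^ N : MvPolynomial Bool k) := by
    intro e
    rw [← MvPolynomial.coeff_add]
    congr 1
    rw [← pderiv_Dp s N]
    ring
  intro n
  induction n with
  | zero =>
    intro e hes he
    have h := hexp e
    rw [coeff_X_mul', if_neg (by simp [Finsupp.mem_support_iff, hes]), add_zero, hR e he] at h
    exact h
  | succ m ih =>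
    intro e hes he
    have hmem : s ∈ e.support := by simp [Finsupp.mem_support_iff, hes]
    have h := hexp e
    rw [coeff_X_mul', if_pos hmem, hR e he] at h
    have hlt : (e - Finsupp.single s 1 : Bool →₀ ℕ) true +
        (e - Finsupp.single s 1 : Bool →₀ ℕ) false < e true + e false := by
      cases s <;> simp [Finsupp.tsub_apply, Finsupp.single_apply, hes] <;> omega
    have hes' : (e - Finsupp.single s 1 : Bool →₀ ℕ) s = m := by
      simp [Finsupp.tsub_apply, hes]
    rw [ih _ hes' (lt_trans hlt he), add_zero] at h
    exact h

theorem Dp_coeff {N : ℕ} (d : Bool →₀ ℕ) (hd : d true + d false ≤ N) :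
    coeff d (Dp k N) = 0 := by
  by_cases hd0 : d = 0
  · subst hd0
    rw [Dp, MvPolynomial.coeff_sum]
    apply Finset.sum_eq_zero
    intro m _
    rw [MvPolynomial.coeff_C_mul, MvPolynomial.coeff_sub, MvPolynomial.coeff_sub, lowzero_Ap_pow (m + 1) 0 (by simp),
      MvPolynomial.coeff_X_pow, MvPolynomial.coeff_X_pow]
    rw [if_neg (by simp), if_neg (by simp)]
    ring
  · have hs : ∃ s : Bool, d s ≠ 0 := by
      by_contra hc
      push_neg at hc
      exact hd0 (Finsupp.ext fun b => hc b)
    obtain ⟨s, hs⟩ := hs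
    have hpos : 0 < d s := Nat.pos_of_ne_zero hs
    set e := d - Finsupp.single s 1 with he
    have hde : e + Finsupp.single s 1 = d :=
      tsub_add_cancel_of_le (Finsupp.single_le_iff.2 hpos)
    have hlt : e true + e false < d true + d false := by
      cases s <;> simp [he, Finsupp.tsub_apply, Finsupp.single_apply] <;> omega
    have hkey := coeff_pderiv s (Dp k N) e
    rw [hde, pderiv_Dp_coeff s (e s) e rfl (lt_of_lt_of_le hlt hd)] at hkey
    have hne : ((e s : k) + 1) ≠ 0 := Nat.cast_add_one_ne_zero (e s)
    exact (mul_eq_zero.1 hkey.symm).resolve_left hne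

end AuxPoly
section AuxKey
set_option synthInstance.maxHeartbeats 400000
set_option maxHeartbeats 1000000
open MvPolynomial
variable {k : Type*} [Field k] [LinearOrder k] [IsStrictOrderedRing k] {G : Type*} [CommGroup G] [LinearOrder G] [IsOrderedMonoid G]

theorem hahn_coeff_sum {ι : Type*} (s : Finset ι) (F : ι → HahnSeries (gdual G) k)
    (γ : gdual G) : (∑ i ∈ s, F i).coeff γ = ∑ i ∈ s, (F i).coeff γ := by
  classical
  induction s using Finset.induction with
  | empty => simp
  | insert a s h ih => rw [Finset.sum_insert h, Finset.sum_insert h, HahnSeries.coeff_add, ih]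

theorem hahn_C_mul_coeff {r : k} {x : HahnSeries (gdual G) k} {γ : gdual G} :
    (HahnSeries.C r * x).coeff γ = r * x.coeff γ := by
  rw [HahnSeries.C_mul_eq_smul, HahnSeries.coeff_smul, smul_eq_mul]

theorem aeval_coeff (f : Bool → HahnSeries (gdual G) k) (P : MvPolynomial Bool k)
    (γ : gdual G) :
    (MvPolynomial.aeval f P).coeff γ =
      ∑ d ∈ P.support, MvPolynomial.coeff d P *
        ((f true ^ d true * f false ^ d false).coeff γ) := by
  conv_lhs => rw [P.as_sum]
  rw [map_sum, hahn_coeff_sum]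
  refine Finset.sum_congr rfl fun d _ => ?_
  rw [MvPolynomial.aeval_monomial]
  have hprod : (d.prod fun i n => f i ^ n) = f true ^ d true * f false ^ d false := by
    rw [Finsupp.prod_fintype _ _ fun i => pow_zero _, Fintype.prod_bool]
  rw [hprod, ← HahnSeries.C_eq_algebraMap, hahn_C_mul_coeff]

theorem logOneUnit_add {ε δ : HahnSeries (gdual G) k} (hε : 0 < ε.orderTop)
    (hδ : 0 < δ.orderTop) (hζ : 0 < (ε + δ + ε * δ).orderTop) :
    logOneUnit (ε + δ + ε * δ) = logOneUnit ε + logOneUnit δ := by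
  classical
  set ζ := ε + δ + ε * δ with hζdef
  set f : Bool → HahnSeries (gdual G) k := fun b => if b then ε else δ with hf
  have hft : f true = ε := rfl
  have hff : f false = δ := rfl
  have hφA : MvPolynomial.aeval f (Ap k) = ζ := by
    simp [Ap, hζdef, hft, hff]
  ext γ
  -- finiteness and choice of N
  have hfam : ∀ p : ℕ × ℕ,
      (HahnSeries.SummableFamily.smul (HahnSeries.SummableFamily.powers ε)
        (HahnSeries.SummableFamily.powers δ)) p = ε ^ p.1 * δ ^ p.2 := by
    intro p
    rw [HahnSeries.SummableFamily.smul_toFun, HahnSeries.of_symm_smul_of_eq_mul]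
    rw [HahnSeries.SummableFamily.powers_of_orderTop_pos hε, HahnSeries.SummableFamily.powers_of_orderTop_pos hδ]
  have hfin : {p : ℕ × ℕ | (ε ^ p.1 * δ ^ p.2).coeff γ ≠ 0}.Finite := by
    have h := (HahnSeries.SummableFamily.smul (HahnSeries.SummableFamily.powers ε)
      (HahnSeries.SummableFamily.powers δ)).finite_co_support γ
    simp only [hfam] at h; exact h
  set N : ℕ := (hfin.toFinset.sup fun p => p.1 + p.2) + 1 with hN
  have hNprop : ∀ i j : ℕ, N ≤ i + j → (ε ^ i * δ ^ j).coeff γ = 0 := by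
    intro i j hij
    by_contra hc
    have hmem : (i, j) ∈ hfin.toFinset := by
      rw [Set.Finite.mem_toFinset]; exact hc
    have h2 := Finset.le_sup (f := fun p : ℕ × ℕ => p.1 + p.2) hmem
    simp only [hN] at *
    omega
  have hεpow : ∀ m : ℕ, N ≤ m → (ε ^ m).coeff γ = 0 := by
    intro m hm
    have := hNprop m 0 (by omega)
    rwa [pow_zero, mul_one] at this
  have hδpow : ∀ m : ℕ, N ≤ m → (δ ^ m).coeff γ = 0 := by
    intro m hm
    have := hNprop 0 m (by omega)
    rwa [pow_zero, one_mul] at this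
  have hζpow : ∀ m : ℕ, N ≤ m → (ζ ^ m).coeff γ = 0 := by
    intro m hm
    have hφ : ζ ^ m = MvPolynomial.aeval f (Ap k ^ m) := by rw [map_pow, hφA]
    rw [hφ, aeval_coeff, hft, hff]
    apply Finset.sum_eq_zero
    intro d hd
    have hdeg : m ≤ d true + d false := by
      by_contra hc
      push_neg at hc
      exact (MvPolynomial.mem_support_iff.1 hd) (lowzero_Ap_pow m d hc)
    rw [hNprop _ _ (le_trans hm hdeg), mul_zero]
  -- truncate the three hsums
  have htrunc : ∀ (x : HahnSeries (gdual G) k) (hx : 0 < x.orderTop),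
      (∀ m : ℕ, N ≤ m → (x ^ m).coeff γ = 0) →
      (logOneUnit x).coeff γ =
        ∑ n ∈ Finset.range N, ((-1 : k) ^ n / ((n : k) + 1)) * (x ^ (n + 1)).coeff γ := by
    intro x hx hpow
    rw [logOneUnit_eq hx,
      HahnSeries.SummableFamily.coeff_hsum_eq_sum_of_subset (t := Finset.range N)]
    · exact Finset.sum_congr rfl fun n _ => logFamily_coeff hx n γ
    · intro n hn
      rw [Set.mem_setOf_eq, logFamily_coeff] at hn
      rw [Finset.coe_range, Set.mem_Iio]
      by_contra hc
      push_neg at hc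
      rw [hpow (n + 1) (by omega), mul_zero] at hn
      exact hn rfl
  rw [HahnSeries.coeff_add, htrunc ζ hζ hζpow, htrunc ε hε hεpow, htrunc δ hδ hδpow]
  -- the polynomial identity
  have hD0 : (MvPolynomial.aeval f (Dp k N)).coeff γ = 0 := by
    rw [aeval_coeff, hft, hff]
    apply Finset.sum_eq_zero
    intro d hd
    have hdeg : N < d true + d false := by
      by_contra hc
      push_neg at hc
      exact (MvPolynomial.mem_support_iff.1 hd) (Dp_coeff d hc)
    rw [hNprop _ _ (by omega), mul_zero]
  have hDsum : (MvPolynomial.aeval f (Dp k N)).coeff γ =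
      ∑ m ∈ Finset.range N, ((-1 : k) ^ m / ((m : k) + 1)) *
        ((ζ ^ (m + 1)).coeff γ - (ε ^ (m + 1)).coeff γ - (δ ^ (m + 1)).coeff γ) := by
    rw [Dp, map_sum, hahn_coeff_sum]
    refine Finset.sum_congr rfl fun m _ => ?_
    rw [map_mul, map_sub, map_sub, map_pow, map_pow, map_pow, hφA, MvPolynomial.aeval_X, MvPolynomial.aeval_X, MvPolynomial.aeval_C,
      ← HahnSeries.C_eq_algebraMap, hahn_C_mul_coeff, hft, hff, HahnSeries.coeff_sub,
      HahnSeries.coeff_sub]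
  rw [hD0] at hDsum
  have hsplit : ∑ m ∈ Finset.range N, ((-1 : k) ^ m / ((m : k) + 1)) *
        ((ζ ^ (m + 1)).coeff γ - (ε ^ (m + 1)).coeff γ - (δ ^ (m + 1)).coeff γ) =
      (∑ n ∈ Finset.range N, ((-1 : k) ^ n / ((n : k) + 1)) * (ζ ^ (n + 1)).coeff γ) -
      (∑ n ∈ Finset.range N, ((-1 : k) ^ n / ((n : k) + 1)) * (ε ^ (n + 1)).coeff γ) -
      (∑ n ∈ Finset.range N, ((-1 : k) ^ n / ((n : k) + 1)) * (δ ^ (n + 1)).coeff γ) := by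
    rw [← Finset.sum_sub_distrib, ← Finset.sum_sub_distrib]
    exact Finset.sum_congr rfl fun m _ => by ring
  rw [hsplit] at hDsum
  linarith

end AuxKey
section AuxAsm
variable {k : Type*} [Field k] [LinearOrder k] [IsStrictOrderedRing k] {G : Type*} [CommGroup G] [LinearOrder G] [IsOrderedMonoid G]

theorem toG_zero' : toG (0 : gdual G) = 1 := rfl

theorem toG_add' (g h : gdual G) : toG (g + h) = toG g * toG h := rfl

theorem toGd_toG' (γ : gdual G) : toGd (toG γ) = γ := rfl

theorem toG_lt' {γ η : gdual G} : γ < η ↔ toG η < toG γ := Iff.rfl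

theorem l_one (l : G → HahnSeries (gdual G) k) (hl : IsPrelogSection l) : l 1 = 0 := by
  have h := hl.map_mul 1 1
  rw [one_mul] at h
  have h2 : l 1 + 0 = l 1 + l 1 := by rw [add_zero]; exact h
  exact (add_left_cancel h2).symm

theorem lg_one (lg : k → k) (hlg : IsResidueLog lg) : lg 1 = 0 := by
  have h := hlg.map_mul 1 1 one_pos one_pos
  rw [one_mul] at h
  have h2 : lg 1 + 0 = lg 1 + lg 1 := by rw [add_zero]; exact h
  exact (add_left_cancel h2).symm

theorem hahn_ne_zero_of_pos {α : HahnSeries (gdual G) k} (hα : 0 < α) : α ≠ 0 := by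
  intro h
  rw [hahn_pos_iff, h, HahnSeries.leadingCoeff_zero] at hα
  exact lt_irrefl 0 hα

theorem zeta_orderTop_pos {ε δ : HahnSeries (gdual G) k} (hε : 0 < ε.orderTop)
    (hδ : 0 < δ.orderTop) : 0 < (ε + δ + ε * δ).orderTop := by
  have hmul : 0 < (ε * δ).orderTop := by
    refine lt_of_lt_of_le ?_ HahnSeries.orderTop_add_le_mul
    calc (0 : WithTop (gdual G)) < ε.orderTop := hε
    _ = ε.orderTop + 0 := (add_zero _).symm
    _ ≤ ε.orderTop + δ.orderTop := add_le_add_right hδ.le _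
  refine pos_orderTop_of_coeff fun γ hγ => ?_
  rw [HahnSeries.coeff_add, HahnSeries.coeff_add, coeff_zero_of_pos_orderTop hε hγ,
    coeff_zero_of_pos_orderTop hδ hγ, coeff_zero_of_pos_orderTop hmul hγ]
  ring

theorem prelogL_mul (lg : k → k) (hlg : IsResidueLog lg) (l : G → HahnSeries (gdual G) k)
    (hl : IsPrelogSection l) {α β : HahnSeries (gdual G) k} (hα : 0 < α) (hβ : 0 < β) :
    prelogL lg l (α * β) = prelogL lg l α + prelogL lg l β := by
  have hα0 : α ≠ 0 := hahn_ne_zero_of_pos hα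
  have hβ0 : β ≠ 0 := hahn_ne_zero_of_pos hβ
  have ha : 0 < α.leadingCoeff := hahn_pos_iff.1 hα
  have hb : 0 < β.leadingCoeff := hahn_pos_iff.1 hβ
  obtain ⟨ε, hε, hαd⟩ := hahn_decomp hα0
  obtain ⟨δ, hδ, hβd⟩ := hahn_decomp hβ0
  have hζ := zeta_orderTop_pos hε hδ
  have hprod : α * β = HahnSeries.single (α.order + β.order)
      (α.leadingCoeff * β.leadingCoeff) * (1 + (ε + δ + ε * δ)) := by
    conv_lhs => rw [hαd, hβd]
    rw [← HahnSeries.single_mul_single]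
    ring
  have hA : prelogL lg l α = l (toG α.order) + HahnSeries.C (lg α.leadingCoeff) +
      logOneUnit ε := by
    conv_lhs => rw [hαd]
    rw [form_prelogL lg l ha.ne' hε]
  have hB : prelogL lg l β = l (toG β.order) + HahnSeries.C (lg β.leadingCoeff) +
      logOneUnit δ := by
    conv_lhs => rw [hβd]
    rw [form_prelogL lg l hb.ne' hδ]
  rw [hprod, form_prelogL lg l (mul_ne_zero ha.ne' hb.ne') hζ, hA, hB,
    logOneUnit_add hε hδ hζ, toG_add', hl.map_mul, hlg.map_mul _ _ ha hb, RingHom.map_add HahnSeries.C (lg α.leadingCoeff) (lg β.leadingCoeff)]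
  abel

theorem hahn_one_eq : (1 : HahnSeries (gdual G) k) =
    HahnSeries.single (0 : gdual G) (1 : k) * (1 + 0) := by
  rw [add_zero, mul_one, ← HahnSeries.C_one]
  rfl

theorem prelogL_one (lg : k → k) (hlg : IsResidueLog lg) (l : G → HahnSeries (gdual G) k)
    (hl : IsPrelogSection l) : prelogL lg l (1 : HahnSeries (gdual G) k) = 0 := by
  rw [hahn_one_eq (k := k) (G := G), form_prelogL lg l one_ne_zero
    (by rw [HahnSeries.orderTop_zero]; exact WithTop.top_pos)]
  rw [toG_zero', l_one l hl, lg_one lg hlg, logOneUnit_zero', HahnSeries.C_zero]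
  simp

end AuxAsm
section AuxFinal
variable {k : Type*} [Field k] [LinearOrder k] [IsStrictOrderedRing k] {G : Type*} [CommGroup G] [LinearOrder G] [IsOrderedMonoid G]

theorem hahn_single_zero_one : (HahnSeries.single (0 : gdual G) (1 : k)) = 1 := by
  rw [← HahnSeries.C_one]; rfl

theorem hahn_C_apply (a : k) : (HahnSeries.C a : HahnSeries (gdual G) k) =
    HahnSeries.single (0 : gdual G) a := rfl

theorem prelogL_pos (lg : k → k) (hlg : IsResidueLog lg) (l : G → HahnSeries (gdual G) k)
    (hl : IsPrelogSection l) {γ : HahnSeries (gdual G) k} (hγ : 1 < γ) :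
    0 < prelogL lg l γ := by
  have hγ' : 0 < (γ - 1).leadingCoeff := hγ
  have hγ0 : γ ≠ 0 := by
    intro h
    rw [h, zero_sub, hahn_leadingCoeff_neg, HahnSeries.leadingCoeff_one] at hγ'
    linarith
  have ha0 : γ.leadingCoeff ≠ 0 := HahnSeries.leadingCoeff_ne_zero.2 hγ0
  obtain ⟨ε, hε, hd⟩ := hahn_decomp hγ0
  have hform : prelogL lg l γ = l (toG γ.order) + HahnSeries.C (lg γ.leadingCoeff) +
      logOneUnit ε := by
    conv_lhs => rw [hd]
    rw [form_prelogL lg l ha0 hε]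
  have hγotop : γ.orderTop = ((γ.order : gdual G) : WithTop (gdual G)) :=
    (HahnSeries.order_eq_orderTop_of_ne_zero hγ0).symm
  rcases lt_trichotomy γ.order 0 with hg | hg | hg
  · -- γ has valuation > 1
    have hlc : (γ - 1).leadingCoeff = γ.leadingCoeff := by
      rw [sub_eq_add_neg, HahnSeries.leadingCoeff_add_eq_left]
      rw [HahnSeries.orderTop_neg, HahnSeries.orderTop_one, hγotop]
      exact_mod_cast hg
    rw [hlc] at hγ'
    have h1g : (1 : G) < toG γ.order := toG_lt'.1 hg
    have hu : (0 : HahnSeries (gdual G) k) < l (toG γ.order) := by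
      have := hl.strictMono h1g
      rwa [l_one l hl] at this
    have hu0 : l (toG γ.order) ≠ 0 := hahn_ne_zero_of_pos hu
    have huord : (l (toG γ.order)).order < 0 :=
      hl.supp_large (toG γ.order) _ (hahn_coeff_order_ne_zero hu0)
    have hw : (0 : WithTop (gdual G)) ≤
        (HahnSeries.C (lg γ.leadingCoeff) + logOneUnit ε).orderTop := by
      refine le_trans (le_min ?_ (logOneUnit_orderTop_pos hε).le)
        HahnSeries.min_orderTop_le_orderTop_add
      rw [hahn_C_apply]
      exact HahnSeries.orderTop_single_le
    have hlt : (l (toG γ.order)).orderTop <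
        (HahnSeries.C (lg γ.leadingCoeff) + logOneUnit ε).orderTop := by
      refine lt_of_lt_of_le ?_ hw
      rw [← HahnSeries.order_eq_orderTop_of_ne_zero hu0]
      exact_mod_cast huord
    rw [hahn_pos_iff, hform, add_assoc, HahnSeries.leadingCoeff_add_eq_left hlt]
    exact hahn_pos_iff.1 hu
  · -- γ has valuation 1
    have hd0 : γ = HahnSeries.C γ.leadingCoeff * (1 + ε) := by
      rw [hahn_C_apply, ← hg]
      conv_lhs => rw [hd]
    have hCε : 0 < (HahnSeries.C γ.leadingCoeff * ε).orderTop := by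
      rcases eq_or_ne ε 0 with rfl | hεne
      · rw [mul_zero, HahnSeries.orderTop_zero]; exact WithTop.top_pos
      · refine lt_of_lt_of_le ?_ HahnSeries.orderTop_add_le_mul
        rw [hahn_C_apply, HahnSeries.orderTop_single ha0]
        rw [WithTop.coe_zero, zero_add]
        exact hε
    have hγ1 : γ - 1 = HahnSeries.C (γ.leadingCoeff - 1) + HahnSeries.C γ.leadingCoeff * ε := by
      conv_lhs => rw [hd0]
      rw [RingHom.map_sub, HahnSeries.C_one]
      ring
    by_cases ha1 : γ.leadingCoeff = 1
    · have hγε : γ - 1 = ε := by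
        rw [hγ1, ha1, sub_self, HahnSeries.C_zero, HahnSeries.C_one]
        ring
      rw [hγε] at hγ'
      have hεne : ε ≠ 0 := HahnSeries.leadingCoeff_ne_zero.1 hγ'.ne'
      rw [hform, hg, toG_zero', l_one l hl, ha1, lg_one lg hlg, HahnSeries.C_zero,
        zero_add, zero_add, hahn_pos_iff, logOneUnit_lc hε hεne]
      exact hγ'
    · have hlc1 : (γ - 1).leadingCoeff = γ.leadingCoeff - 1 := by
        rw [hγ1, HahnSeries.leadingCoeff_add_eq_left, hahn_C_apply,
          HahnSeries.leadingCoeff_of_single]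
        rw [hahn_C_apply, HahnSeries.orderTop_single (sub_ne_zero.2 ha1)]
        exact hCε
      rw [hlc1] at hγ'
      have h1a : (1 : k) < γ.leadingCoeff := by linarith
      have hlga : 0 < lg γ.leadingCoeff := by
        have := hlg.strictMonoOn (Set.mem_Ioi.2 one_pos)
          (Set.mem_Ioi.2 (lt_trans one_pos h1a)) h1a
        rwa [lg_one lg hlg] at this
      rw [hform, hg, toG_zero', l_one l hl, zero_add, hahn_pos_iff,
        HahnSeries.leadingCoeff_add_eq_left, hahn_C_apply, HahnSeries.leadingCoeff_of_single]
      · exact hlga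
      · rw [hahn_C_apply, HahnSeries.orderTop_single hlga.ne']
        exact logOneUnit_orderTop_pos hε
  · -- γ has valuation < 1 : impossible
    exfalso
    have hlc : (γ - 1).leadingCoeff = -1 := by
      have h1 : γ - 1 = -1 + γ := by ring
      rw [h1, HahnSeries.leadingCoeff_add_eq_left, hahn_leadingCoeff_neg,
        HahnSeries.leadingCoeff_one]
      rw [HahnSeries.orderTop_neg, HahnSeries.orderTop_one, hγotop]
      exact_mod_cast hg
    rw [hlc] at hγ'
    linarith

theorem hahn_inv_pos {α : HahnSeries (gdual G) k} (hα : 0 < α) : 0 < α⁻¹ := by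
  have hα0 : α ≠ 0 := hahn_ne_zero_of_pos hα
  have hml := hahn_lc_mul hα0 (inv_ne_zero hα0)
  rw [mul_inv_cancel₀ hα0, HahnSeries.leadingCoeff_one] at hml
  rw [hahn_pos_iff] at hα ⊢
  nlinarith [hα, hml]

theorem prelogL_mono (lg : k → k) (hlg : IsResidueLog lg) (l : G → HahnSeries (gdual G) k)
    (hl : IsPrelogSection l) {α β : HahnSeries (gdual G) k} (hα : 0 < α) (hαβ : α < β) :
    prelogL lg l α < prelogL lg l β := by
  have hβ : 0 < β := lt_trans hα hαβ
  have hα0 : α ≠ 0 := hahn_ne_zero_of_pos hα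
  have hq0 : 0 < β * α⁻¹ := hahn_mul_pos hβ (hahn_inv_pos hα)
  have hq1 : 1 < β * α⁻¹ := by
    show 0 < (β * α⁻¹ - 1).leadingCoeff
    have hdiff : β * α⁻¹ - 1 = (β - α) * α⁻¹ := by
      rw [sub_mul, mul_inv_cancel₀ hα0]
    have hβα : 0 < (β - α).leadingCoeff := hαβ
    rw [hdiff, hahn_lc_mul (HahnSeries.leadingCoeff_ne_zero.1 hβα.ne') (inv_ne_zero hα0)]
    exact mul_pos hβα (hahn_pos_iff.1 (hahn_inv_pos hα))
  have hLq := prelogL_pos lg hlg l hl hq1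
  have hmul := prelogL_mul lg hlg l hl hα hq0
  have hαq : α * (β * α⁻¹) = β := by
    have : α * (β * α⁻¹) = α * α⁻¹ * β := by ring
    rw [this, mul_inv_cancel₀ hα0, one_mul]
  rw [← hαq, hmul]
  exact lt_add_of_pos_right _ hLq

theorem prelogL_C (lg : k → k) (hlg : IsResidueLog lg) (l : G → HahnSeries (gdual G) k)
    (hl : IsPrelogSection l) {a : k} (ha : 0 < a) :
    prelogL lg l (HahnSeries.C a) = HahnSeries.C (lg a) := by
  have h1 : (HahnSeries.C a : HahnSeries (gdual G) k) =
      HahnSeries.single (0 : gdual G) a * (1 + 0) := by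
    rw [add_zero, mul_one, hahn_C_apply]
  rw [h1, form_prelogL lg l ha.ne'
    (by rw [HahnSeries.orderTop_zero]; exact WithTop.top_pos), toG_zero', l_one l hl,
    logOneUnit_zero', zero_add, add_zero]

theorem prelogL_single (lg : k → k) (hlg : IsResidueLog lg) (l : G → HahnSeries (gdual G) k)
    (hl : IsPrelogSection l) (g : G) :
    prelogL lg l (HahnSeries.single (toGd g) (1 : k)) = l g := by
  have h1 : (HahnSeries.single (toGd g) (1 : k)) =
      HahnSeries.single (toGd g) (1 : k) * (1 + 0) := by rw [add_zero, mul_one]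
  rw [h1, form_prelogL lg l one_ne_zero
    (by rw [HahnSeries.orderTop_zero]; exact WithTop.top_pos), lg_one lg hlg,
    HahnSeries.C_zero, logOneUnit_zero', add_zero, add_zero]
  rfl

theorem prelogL_oneUnit (lg : k → k) (hlg : IsResidueLog lg) (l : G → HahnSeries (gdual G) k)
    (hl : IsPrelogSection l) {ε : HahnSeries (gdual G) k} (hε : 0 < ε.orderTop) :
    prelogL lg l (1 + ε) = logOneUnit ε := by
  have h1 : (1 : HahnSeries (gdual G) k) + ε =
      HahnSeries.single (0 : gdual G) (1 : k) * (1 + ε) := by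
    rw [hahn_single_zero_one, one_mul]
  rw [h1, form_prelogL lg l one_ne_zero hε, toG_zero', l_one l hl, lg_one lg hlg,
    HahnSeries.C_zero, zero_add, zero_add]

end AuxFinal
section AuxUnique
variable {k : Type*} [Field k] [LinearOrder k] [IsStrictOrderedRing k] {G : Type*} [CommGroup G] [LinearOrder G] [IsOrderedMonoid G]

theorem prelogL_unique (lg : k → k) (hlg : IsResidueLog lg) (l : G → HahnSeries (gdual G) k)
    (hl : IsPrelogSection l) (L' : HahnSeries (gdual G) k → HahnSeries (gdual G) k)
    (hmul : ∀ α β : HahnSeries (gdual G) k, 0 < α → 0 < β → L' (α * β) = L' α + L' β)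
    (hres : ∀ a : k, 0 < a → L' (HahnSeries.C a) = HahnSeries.C (lg a))
    (hsec : ∀ g : G, L' (HahnSeries.single (toGd g) (1 : k)) = l g)
    (hunit : ∀ ε : HahnSeries (gdual G) k, 0 < ε.orderTop → L' (1 + ε) = logOneUnit ε)
    (α : HahnSeries (gdual G) k) (hα : 0 < α) : L' α = prelogL lg l α := by
  have hα0 : α ≠ 0 := hahn_ne_zero_of_pos hα
  have ha : 0 < α.leadingCoeff := hahn_pos_iff.1 hα
  obtain ⟨ε, hε, hd⟩ := hahn_decomp hα0
  have hsplit : α = HahnSeries.single α.order (1 : k) *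
      (HahnSeries.C α.leadingCoeff * (1 + ε)) := by
    conv_lhs => rw [hd]
    rw [← mul_assoc, hahn_C_apply, HahnSeries.single_mul_single, add_zero, one_mul]
  have hCa : 0 < (HahnSeries.C α.leadingCoeff : HahnSeries (gdual G) k) := by
    rw [hahn_pos_iff, hahn_C_apply, HahnSeries.leadingCoeff_of_single]
    exact ha
  have h1ε : 0 < (1 : HahnSeries (gdual G) k) + ε := by
    rw [hahn_pos_iff, lc_one_add hε]
    exact one_pos
  have hform : prelogL lg l α = l (toG α.order) + HahnSeries.C (lg α.leadingCoeff) +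
      logOneUnit ε := by
    conv_lhs => rw [hd]
    rw [form_prelogL lg l ha.ne' hε]
  conv_lhs => rw [hsplit]
  rw [hmul _ _ (hahn_single_pos α.order) (hahn_mul_pos hCa h1ε), hmul _ _ hCa h1ε,
    hres _ ha, hunit ε hε, hform]
  have hLsingle : L' (HahnSeries.single α.order (1 : k)) = l (toG α.order) := by
    rw [← toGd_toG' α.order]
    exact hsec (toG α.order)
  rw [hLsingle, add_assoc]

end AuxUnique

theorem prelog_main {k : Type*} [Field k] [LinearOrder k] [IsStrictOrderedRing k]
    {G : Type*} [CommGroup G] [LinearOrder G] [IsOrderedMonoid G]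
    (lg : k → k) (hlg : IsResidueLog lg)
    (l : G → HahnSeries (gdual G) k) (hl : IsPrelogSection l) :
    (∀ α β : HahnSeries (gdual G) k, 0 < α → 0 < β →
      prelogL lg l (α * β) = prelogL lg l α + prelogL lg l β) ∧
    (∀ α β : HahnSeries (gdual G) k, 0 < α → α < β →
      prelogL lg l α < prelogL lg l β) ∧
    (∀ a : k, 0 < a → prelogL lg l (HahnSeries.C a) = HahnSeries.C (lg a)) ∧
    (∀ g : G, prelogL lg l (HahnSeries.single (toGd g) (1 : k)) = l g) ∧
    (∀ ε : HahnSeries (gdual G) k, 0 < ε.orderTop →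
      prelogL lg l (1 + ε) = logOneUnit ε) ∧
    (∀ L' : HahnSeries (gdual G) k → HahnSeries (gdual G) k,
      (∀ α β : HahnSeries (gdual G) k, 0 < α → 0 < β → L' (α * β) = L' α + L' β) →
      (∀ α β : HahnSeries (gdual G) k, 0 < α → α < β → L' α < L' β) →
      (∀ a : k, 0 < a → L' (HahnSeries.C a) = HahnSeries.C (lg a)) →
      (∀ g : G, L' (HahnSeries.single (toGd g) (1 : k)) = l g) →
      (∀ ε : HahnSeries (gdual G) k, 0 < ε.orderTop → L' (1 + ε) = logOneUnit ε) →
      ∀ α : HahnSeries (gdual G) k, 0 < α → L' α = prelogL lg l α) :=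
  ⟨fun _ _ hα hβ => prelogL_mul lg hlg l hl hα hβ,
   fun _ _ hα hαβ => prelogL_mono lg hlg l hl hα hαβ,
   fun _ ha => prelogL_C lg hlg l hl ha,
   fun g => prelogL_single lg hlg l hl g,
   fun _ hε => prelogL_oneUnit lg hlg l hl hε,
   fun L' hmul _ hres hsec hunit α hα =>
     prelogL_unique lg hlg l hl L' hmul hres hsec hunit α hα⟩
/-- Given an order-preserving group embedding `log : (k^{>0},·) → (k,+)`
and a prelogarithmic section `l` of `k((G))`, the map `L = prelogL lg l`,
`L(g·a·(1+ε)) = l(g) + log a + Σ_{i≥1} (-1)^(i-1) ε^i/i`, is an order-preserving group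
embedding `(k((G))^{>0},·) → (k((G)),+)`, and it is the unique such embedding extending
`log` on `k^{>0}`, agreeing with `l` on `G` and with the logarithm on 1-units on
`1 + k((G^{<1}))`. -/
theorem prelog_is_unique_embedding {k : Type*} [Field k] [LinearOrder k] [IsStrictOrderedRing k]
    {G : Type*} [CommGroup G] [LinearOrder G] [IsOrderedMonoid G]
    (lg : k → k) (hlg : IsResidueLog lg)
    (l : G → HahnSeries (gdual G) k) (hl : IsPrelogSection l) :
    (∀ α β : HahnSeries (gdual G) k, 0 < α → 0 < β →
      prelogL lg l (α * β) = prelogL lg l α + prelogL lg l β) ∧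
    (∀ α β : HahnSeries (gdual G) k, 0 < α → α < β →
      prelogL lg l α < prelogL lg l β) ∧
    (∀ a : k, 0 < a → prelogL lg l (HahnSeries.C a) = HahnSeries.C (lg a)) ∧
    (∀ g : G, prelogL lg l (HahnSeries.single (toGd g) (1 : k)) = l g) ∧
    (∀ ε : HahnSeries (gdual G) k, 0 < ε.orderTop →
      prelogL lg l (1 + ε) = logOneUnit ε) ∧
    (∀ L' : HahnSeries (gdual G) k → HahnSeries (gdual G) k,
      (∀ α β : HahnSeries (gdual G) k, 0 < α → 0 < β → L' (α * β) = L' α + L' β) →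
      (∀ α β : HahnSeries (gdual G) k, 0 < α → α < β → L' α < L' β) →
      (∀ a : k, 0 < a → L' (HahnSeries.C a) = HahnSeries.C (lg a)) →
      (∀ g : G, L' (HahnSeries.single (toGd g) (1 : k)) = l g) →
      (∀ ε : HahnSeries (gdual G) k, 0 < ε.orderTop → L' (1 + ε) = logOneUnit ε) →
      ∀ α : HahnSeries (gdual G) k, 0 < α → L' α = prelogL lg l α) := by
  exact prelog_main lg hlg l hl

end
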